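/- Suppose there is a single regulated commodity (k=1). Let E be a finite production economy with quota with firm quotas m^{(j)}∈R≤0 and m=Σ_j m^{(j)}<0. Let F be the global quota economy with all private firm quotas 0, government firm quota −m, and government firm shares θ̃(ω)(0)=(Σ_j θ_{ωj} m^{(j)})/m. Then every quota equilibrium of E is a global quota equilibrium of F (with the correspondence of economies independent of the equilibrium price). -/

import Mathlib

open Finset

noncomputable section

variable {Ω J C : Type*}

/-- Dot product of two commodity vectors. -/
def dotp [Fintype C] (p z : C → ℝ) : ℝ := ∑ i, p i * z i

/-- A finite production economy with quota: consumption sets, global preferences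
(depending on the whole consumption allocation, production profile and price),
endowments, shareholdings, production sets, the set `R` of regulated commodities,
the firms' quotas `m` (the negative of the quota) and a flag `free` recording, for
non-regulated commodities, whether free disposal is allowed. -/
structure QuotaEconomy (Ω J C : Type*) where
  X : Ω → Set (C → ℝ)
  pref : Ω → (Ω → C → ℝ) → (J → C → ℝ) → (C → ℝ) → (C → ℝ) → (C → ℝ) → Prop
  e : Ω → C → ℝ
  θ : Ω → J → ℝ
  Y : J → Set (C → ℝ)
  R : Finset C
  m : J → C → ℝ
  free : C → Prop

variable [Fintype Ω] [Fintype J] [Fintype C]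

/-- Agent `ω`'s wealth: endowment value plus shares of firm profits, where each firm's
profit includes the revenue from its quota on the regulated commodities. -/
def QuotaEconomy.wealth (E : QuotaEconomy Ω J C) (p : C → ℝ) (y : J → C → ℝ) (ω : Ω) : ℝ :=
  dotp p (E.e ω) + ∑ j, E.θ ω j * (dotp p (y j) + ∑ i ∈ E.R, p i * E.m j i)

/-- Aggregate excess demand. -/
def QuotaEconomy.excess (E : QuotaEconomy Ω J C) (x : Ω → C → ℝ) (y : J → C → ℝ) : C → ℝ :=
  fun i => ∑ ω, x ω i - ∑ ω, E.e ω i - ∑ j, y j i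

/-- Quota compliance: consumptions and productions are admissible, excess demand of a
regulated commodity equals the total quota, and excess demand of a non-regulated
commodity is ≤ 0 when free disposal is allowed and = 0 otherwise. -/
def QuotaEconomy.Compliant (E : QuotaEconomy Ω J C) (x : Ω → C → ℝ) (y : J → C → ℝ) : Prop :=
  (∀ ω, x ω ∈ E.X ω) ∧ (∀ j, y j ∈ E.Y j) ∧
  (∀ i ∈ E.R, E.excess x y i = ∑ j, E.m j i) ∧
  (∀ i ∉ E.R, E.excess x y i ≤ 0 ∧ (¬ E.free i → E.excess x y i = 0))

/-- Quota equilibrium: price on the simplex, compliance, profit maximization, and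
demand optimality (strictly preferred bundles are unaffordable). -/
def QuotaEconomy.Equilibrium (E : QuotaEconomy Ω J C) (x : Ω → C → ℝ)
    (y : J → C → ℝ) (p : C → ℝ) : Prop :=
  (∑ i, |p i|) = 1 ∧
  E.Compliant x y ∧
  (∀ j, ∀ z ∈ E.Y j, dotp p z ≤ dotp p (y j)) ∧
  (∀ ω, dotp p (x ω) ≤ E.wealth p y ω) ∧
  (∀ ω, ∀ z ∈ E.X ω, E.pref ω x y p z (x ω) → ¬ dotp p z ≤ E.wealth p y ω)

/-- with a single regulated commodity, every quota equilibrium of `E` is a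
global quota equilibrium of the fixed economy `F` whose government firm `g` holds the
whole quota and whose government shares are `(Σ_j θ_{ωj} m^{(j)})/m`, a correspondence
independent of the equilibrium price. -/
theorem stmt3 [DecidableEq J] (E : QuotaEconomy Ω J C) (g : J)
    (hg : E.Y g = ({0} : Set (C → ℝ)))
    (c0 : C) (hR : E.R = {c0})
    (hmneg : ∀ j, E.m j c0 ≤ 0) (hmtot : (∑ j, E.m j c0) < 0) :
    ∀ (xe : Ω → C → ℝ) (ye : J → C → ℝ) (pe : C → ℝ),
      E.Equilibrium xe ye pe →
      QuotaEconomy.Equilibrium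
        { E with
          m := fun j => if j = g then (fun i => ∑ j', E.m j' i) else (0 : C → ℝ)
          θ := fun ω j => if j = g
            then (∑ j', E.θ ω j' * E.m j' c0) / (∑ j', E.m j' c0)
            else E.θ ω j }
        xe ye pe := by
  intro xe ye pe hEq
  obtain ⟨hp, ⟨hX, hY, hRq, hNR⟩, hprof, hbud, hopt⟩ := hEq
  have hyg : ye g = 0 := by
    have := hY g; rw [hg] at this; simpa using this
  have hm0 : (∑ j, E.m j c0) ≠ 0 := ne_of_lt hmtot
  have hdyg : dotp pe (ye g) = 0 := by simp [hyg, dotp]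
  have hw : ∀ ω, QuotaEconomy.wealth
      { E with
        m := fun j => if j = g then (fun i => ∑ j', E.m j' i) else (0 : C → ℝ)
        θ := fun ω j => if j = g
          then (∑ j', E.θ ω j' * E.m j' c0) / (∑ j', E.m j' c0)
          else E.θ ω j } pe ye ω = E.wealth pe ye ω := by
    intro ω
    simp only [QuotaEconomy.wealth, hR, Finset.sum_singleton]
    congr 1
    have h1 : ∀ j : J,
        (if j = g then (∑ j', E.θ ω j' * E.m j' c0) / (∑ j', E.m j' c0) else E.θ ω j)
          * (dotp pe (ye j)
            + pe c0 * (if j = g then (fun i => ∑ j', E.m j' i) else (0 : C → ℝ)) c0)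
        = (if j = g then (∑ j', E.θ ω j' * E.m j' c0) / (∑ j', E.m j' c0) else E.θ ω j)
            * dotp pe (ye j)
          + (if j = g then pe c0 * (∑ j', E.θ ω j' * E.m j' c0) else 0) := by
      intro j
      by_cases hj : j = g
      · subst hj
        simp only [if_pos rfl, ↓reduceIte]
        field_simp
      · simp [hj]
    simp only [h1]
    rw [Finset.sum_add_distrib, Finset.sum_ite_eq' Finset.univ g, if_pos (Finset.mem_univ g)]
    have h2 : ∀ j : J,
        E.θ ω j * (dotp pe (ye j) + pe c0 * E.m j c0)
        = E.θ ω j * dotp pe (ye j) + pe c0 * (E.θ ω j * E.m j c0) := by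
      intro j; ring
    simp only [h2]
    rw [Finset.sum_add_distrib, ← Finset.mul_sum]
    congr 1
    apply Finset.sum_congr rfl
    intro j _
    by_cases hj : j = g
    · subst hj; simp [hdyg]
    · simp [hj]
  refine ⟨hp, ⟨hX, hY, ?_, hNR⟩, hprof, fun ω => (hw ω) ▸ hbud ω,
    fun ω z hz hpref => (hw ω) ▸ hopt ω z hz hpref⟩
  intro i hi
  have := hRq i hi
  simp only [QuotaEconomy.excess] at this ⊢
  rw [this]
  simp only [apply_ite (fun f : C → ℝ => f i), Pi.zero_apply]
  rw [Finset.sum_ite_eq' Finset.univ g (fun _ => ∑ j', E.m j' i)]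
  simp
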